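/- The maximum value of ∑_{n=1}^∞ (-1)^n ε_n/(d₁⋯d_n) over all digit sequences (ε_n) with ε_n ∈ {0,…,d_n−1} equals a₀ = ∑_{n=1}^∞ (-1)^{n+1}/(d₁⋯d_n), attained by the sequence with ε_{2k−1} = 0 and ε_{2k} = d_{2k}−1 for all k. -/

import Mathlib

/-- The maximum value of ∑ (-1)^n ε_n/(d₁⋯d_n) over all digit sequences equals
a₀ = ∑ (-1)^{n+1}/(d₁⋯d_n), attained by ε_{2k−1} = 0, ε_{2k} = d_{2k}−1. -/
theorem alternating_cantor_isGreatest (d : ℕ → ℕ) (hd : ∀ n, 1 ≤ n → 2 ≤ d n) :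
    IsGreatest
      {x : ℝ | ∃ ε : ℕ → ℕ, (∀ n, 1 ≤ n → ε n < d n) ∧
        x = ∑' n : ℕ, (-1 : ℝ) ^ (n + 1) * (ε (n + 1) : ℝ) /
              ∏ j ∈ Finset.Icc 1 (n + 1), (d j : ℝ)}
      (∑' n : ℕ, (-1 : ℝ) ^ (n + 2) / ∏ j ∈ Finset.Icc 1 (n + 1), (d j : ℝ)) ∧
    (∑' n : ℕ, (-1 : ℝ) ^ (n + 1) *
        (((if Odd (n + 1) then 0 else d (n + 1) - 1) : ℕ) : ℝ) /
        ∏ j ∈ Finset.Icc 1 (n + 1), (d j : ℝ)) =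
      ∑' n : ℕ, (-1 : ℝ) ^ (n + 2) / ∏ j ∈ Finset.Icc 1 (n + 1), (d j : ℝ) := by
  set P : ℕ → ℝ := fun n => ∏ j ∈ Finset.Icc 1 n, (d j : ℝ) with hP
  have hdpos : ∀ n, 1 ≤ n → (0:ℝ) < d n := fun n hn => by
    have := hd n hn; positivity
  have hPsucc : ∀ n, P (n + 1) = P n * d (n + 1) := by
    intro n
    simp only [hP]
    rw [Finset.prod_Icc_succ_top (Nat.le_add_left 1 n)]
  have hPpos : ∀ n, 0 < P n := by
    intro n; induction n with
    | zero => simp [hP]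
    | succ k ih =>
      rw [hPsucc]
      exact mul_pos ih (hdpos (k + 1) (by omega))
  have hPge : ∀ n, (2:ℝ) ^ n ≤ P n := by
    intro n; induction n with
    | zero => simp [hP]
    | succ k ih =>
      rw [hPsucc, pow_succ]
      have h2 : (2:ℝ) ≤ d (k + 1) := by exact_mod_cast hd (k + 1) (by omega)
      exact mul_le_mul ih h2 (by norm_num) (hPpos k).le
  have hinv : ∀ n, 1 / P n ≤ (1/2:ℝ) ^ n := by
    intro n
    rw [div_pow, one_pow]
    exact one_div_le_one_div_of_le (by positivity) (hPge n)
  have hgeo : Summable (fun n : ℕ => (1/2:ℝ) ^ n) :=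
    summable_geometric_of_lt_one (by norm_num) (by norm_num)
  -- generic summability of digit series
  have hsum : ∀ ε : ℕ → ℕ, (∀ n, 1 ≤ n → ε n < d n) →
      Summable (fun n : ℕ => (-1:ℝ) ^ (n + 1) * (ε (n + 1) : ℝ) / P (n + 1)) := by
    intro ε hε
    apply Summable.of_norm_bounded hgeo
    intro n
    have hpp := hPpos (n + 1)
    have hb : (ε (n + 1) : ℝ) ≤ d (n + 1) := by
      exact_mod_cast (hε (n + 1) (by omega)).le
    have h1 : ‖(-1:ℝ) ^ (n + 1) * (ε (n + 1) : ℝ) / P (n + 1)‖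
        = (ε (n + 1) : ℝ) / P (n + 1) := by
      rw [norm_div, norm_mul, norm_pow, norm_neg, norm_one, one_pow, one_mul,
        Real.norm_natCast, Real.norm_of_nonneg hpp.le]
    rw [h1]
    calc (ε (n + 1) : ℝ) / P (n + 1) ≤ (d (n + 1) : ℝ) / P (n + 1) :=
          div_le_div_of_nonneg_right hb hpp.le
      _ = 1 / P n := by
          rw [hPsucc]
          have := (hdpos (n+1) (by omega)).ne'
          have := (hPpos n).ne'
          field_simp
      _ ≤ (1/2:ℝ) ^ n := hinv n
  -- summability of the target series
  have hsumg : Summable (fun n : ℕ => (-1:ℝ) ^ (n + 2) / P (n + 1)) := by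
    apply Summable.of_norm_bounded hgeo
    intro n
    have hpp := hPpos (n + 1)
    rw [norm_div, norm_pow, norm_neg, norm_one, one_pow, Real.norm_of_nonneg hpp.le]
    refine (hinv (n + 1)).trans ?_
    exact pow_le_pow_of_le_one (by norm_num) (by norm_num) (by omega)
  -- the maximizing digit sequence
  set εc : ℕ → ℕ := fun n => if Odd n then 0 else d n - 1 with hεc
  have hεcok : ∀ n, 1 ≤ n → εc n < d n := by
    intro n hn
    simp only [hεc]
    split
    · have := hd n hn; omega
    · have := hd n hn; omega
  have hεcval : ∀ n, 1 ≤ n → ((εc n : ℕ) : ℝ) = if Odd n then 0 else (d n : ℝ) - 1 := by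
    intro n hn
    have h1 : 1 ≤ d n := by have := hd n hn; omega
    simp only [hεc]
    split
    · simp
    · rw [Nat.cast_sub h1, Nat.cast_one]
  -- summability of odd-index reciprocals
  have hq : Summable (fun k : ℕ => 1 / P (2 * k + 1)) := by
    apply Summable.of_norm_bounded hgeo
    intro k
    rw [Real.norm_of_nonneg (by positivity)]
    refine (hinv (2 * k + 1)).trans ?_
    exact pow_le_pow_of_le_one (by norm_num) (by norm_num) (by omega)
  -- the difference series
  set h : ℕ → ℝ := fun n =>
      (-1:ℝ) ^ (n + 1) * (εc (n + 1) : ℝ) / P (n + 1) - (-1:ℝ) ^ (n + 2) / P (n + 1)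
    with hh
  have hheven : ∀ k, h (2 * k) = -(1 / P (2 * k + 1)) := by
    intro k
    have hodd : Odd (2 * k + 1) := ⟨k, by ring⟩
    simp only [hh, hεcval (2 * k + 1) (by omega), if_pos hodd]
    have h2 : (-1:ℝ) ^ (2 * k + 2) = 1 := by
      rw [show 2 * k + 2 = 2 * (k + 1) by ring, pow_mul]; norm_num
    rw [h2]
    ring
  have hhodd : ∀ k, h (2 * k + 1) = 1 / P (2 * k + 1) := by
    intro k
    have hne : ¬ Odd (2 * k + 2) := by simp only [Nat.odd_iff]; omega
    simp only [hh, hεcval (2 * k + 1 + 1) (by omega)]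
    rw [if_neg (by simpa using hne)]
    have h2 : (-1:ℝ) ^ (2 * k + 1 + 1) = 1 := by
      rw [show 2 * k + 1 + 1 = 2 * (k + 1) by ring, pow_mul]; norm_num
    have h3 : (-1:ℝ) ^ (2 * k + 1 + 2) = -1 := by
      rw [show 2 * k + 1 + 2 = 2 * (k + 1) + 1 by ring, pow_succ, pow_mul]; norm_num
    rw [h2, h3]
    have hps := hPsucc (2 * k + 1)
    have hppos := hPpos (2 * k + 1)
    have hdp := hdpos (2 * k + 2) (by omega)
    rw [show 2 * k + 1 + 1 = 2 * k + 2 from rfl, hps]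
    field_simp
    ring
  have hsumc := hsum εc hεcok
  have hsumh : Summable h := hsumc.sub hsumg
  have htsumh : ∑' n, h n = 0 := by
    rw [← tsum_even_add_odd (by simpa [hheven] using hq.neg)
      (by simpa [hhodd] using hq)]
    have e1 : ∑' k, h (2 * k) = -∑' k, 1 / P (2 * k + 1) := by
      rw [← tsum_neg]; exact tsum_congr fun k => by rw [hheven]
    have e2 : ∑' k, h (2 * k + 1) = ∑' k, 1 / P (2 * k + 1) :=
      tsum_congr fun k => hhodd k
    rw [e1, e2]; ring
  have hkey : (∑' n : ℕ, (-1:ℝ) ^ (n + 1) * (εc (n + 1) : ℝ) / P (n + 1))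
      = ∑' n : ℕ, (-1:ℝ) ^ (n + 2) / P (n + 1) := by
    have := Summable.tsum_sub hsumc hsumg
    have h0 : ∑' n, ((-1:ℝ) ^ (n + 1) * (εc (n + 1) : ℝ) / P (n + 1)
        - (-1:ℝ) ^ (n + 2) / P (n + 1)) = 0 := htsumh
    rw [this] at h0
    linarith
  constructor
  · constructor
    · exact ⟨εc, hεcok, hkey.symm⟩
    · rintro x ⟨ε, hε, rfl⟩
      rw [← hkey]
      apply Summable.tsum_le_tsum _ (hsum ε hε) hsumc
      intro n
      have hpp := hPpos (n + 1)
      rcases Nat.even_or_odd n with he | ho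
      · -- n even, n+1 odd : term ≤ 0 = candidate term
        have hsign : (-1:ℝ) ^ (n + 1) = -1 := (he.add_one).neg_one_pow
        have hoddn1 : Odd (n + 1) := he.add_one
        rw [hsign, hεcval (n + 1) (by omega), if_pos hoddn1]
        have h0 : (-1:ℝ) * 0 / P (n + 1) = 0 := by ring
        rw [h0, neg_one_mul, neg_div]
        exact neg_nonpos.mpr (by positivity)
      · -- n odd, n+1 even : term ≤ (d-1)/P = candidate term
        have hev : Even (n + 1) := ho.add_one
        have hsign : (-1:ℝ) ^ (n + 1) = 1 := hev.neg_one_pow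
        rw [hsign, hεcval (n + 1) (by omega), if_neg (Nat.not_odd_iff_even.mpr hev)]
        have hb : (ε (n + 1) : ℝ) ≤ (d (n + 1) : ℝ) - 1 := by
          have := hε (n + 1) (by omega)
          have : ε (n + 1) + 1 ≤ d (n + 1) := this
          have : ((ε (n + 1) : ℕ) : ℝ) + 1 ≤ d (n + 1) := by exact_mod_cast this
          linarith
        rw [one_mul, one_mul]
        exact div_le_div_of_nonneg_right hb hpp.le
  · exact hkey
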